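/- For every natural number n ≥ 0, the Gaussian third-order Jacobsthal number satisfies the Binet formula Jg(n) = (1/7)·[ (1 + i/2)·2^(n+1) + (1 - 3i)·Ω(n) - (2 + i)·Ω(n+1) ]. -/
import Mathlib


/-- Ω(n) = 0, 1, -1 according as n ≡ 0, 1, 2 (mod 3). -/
def Omg (n : ℕ) : ℤ := if n % 3 = 0 then 0 else if n % 3 = 1 then 1 else -1

lemma Omg_add_three (n : ℕ) : Omg (n + 3) = Omg n := by
  simp [Omg, Nat.add_mod]

lemma Omg_sum (n : ℕ) : (Omg n : ℂ) + Omg (n + 1) + Omg (n + 2) = 0 := by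
  have h : n % 3 = 0 ∨ n % 3 = 1 ∨ n % 3 = 2 := by omega
  rcases h with h | h | h <;> simp [Omg, Nat.add_mod, h]

theorem binet_gaussian_third_order_jacobsthal
    (Jg : ℕ → ℂ)
    (h0 : Jg 0 = 0)
    (h1 : Jg 1 = 1)
    (h2 : Jg 2 = 1 + Complex.I)
    (hrec : ∀ n : ℕ, Jg (n + 3) = Jg (n + 2) + Jg (n + 1) + 2 * Jg n) :
    ∀ n : ℕ,
      Jg n = (1 / 7 : ℂ) *
        ((1 + Complex.I / 2) * 2 ^ (n + 1)
          + (1 - 3 * Complex.I) * (Omg n : ℂ)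
          - (2 + Complex.I) * (Omg (n + 1) : ℂ)) := by
  set F : ℕ → ℂ := fun n => (1 / 7 : ℂ) *
        ((1 + Complex.I / 2) * 2 ^ (n + 1)
          + (1 - 3 * Complex.I) * (Omg n : ℂ)
          - (2 + Complex.I) * (Omg (n + 1) : ℂ)) with hF
  suffices H : ∀ n, Jg n = F n ∧ Jg (n + 1) = F (n + 1) ∧ Jg (n + 2) = F (n + 2) by
    exact fun n => (H n).1
  intro n
  induction n with
  | zero =>
    refine ⟨?_, ?_, ?_⟩ <;> simp only [hF, h0, h1, h2, Omg] <;> norm_num <;> ring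
  | succ k ih =>
    obtain ⟨ia, ib, ic⟩ := ih
    refine ⟨ib, ic, ?_⟩
    rw [show k + 1 + 2 = k + 3 from rfl, hrec, ia, ib, ic, hF]
    simp only
    rw [Omg_add_three, show k + 3 + 1 = (k + 1) + 3 from rfl, Omg_add_three]
    have hs1 := Omg_sum k
    have hs2 := Omg_sum (k + 1)
    simp only [show k + 1 + 1 = k + 2 from rfl, show k + 1 + 2 = k + 3 from rfl] at hs2 ⊢
    push_cast at hs1 hs2 ⊢
    linear_combination (-1/7 - 4/7 * Complex.I) * hs1
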